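/- Let c_k > 0 and μ_k > 0 for 1 ≤ k ≤ K, let σ² > 0, and assume Σ_{k=1}^K c_k²/μ_k > σ². Let γ* > 0 be the unique positive solution of Σ_{k=1}^K (c_k²/μ_k)/((c_k²/μ_k)γ + 1)² = σ², set η* = 1/γ*, and define p_k* = c_k²η*/(c_k² + η*μ_k)² for each k. Then for every p ∈ [0, ∞)^K and every η > 0, L(p*, η*) ≤ L(p, η); i.e., the regularized channel-inversion powers p_k* = (c_k√(η*)/(c_k² + η*μ_k))² together with η* jointly minimize the per-state Lagrangian. (core of Theorem 2) -/

import Mathlib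

set_option maxHeartbeats 1000000 in
private lemma aux_inner (a r m x s t : ℝ) (hr : 0 < r) (hr2 : r ^ 2 = a)
    (hm : 0 < m) (hx : 0 < x) (hs : 0 ≤ s) (ht : 0 < t) (ht2 : t ^ 2 = x) :
    x * m / (a + x * m) ≤ (s * r / t - 1) ^ 2 + m * s ^ 2 := by
  have ha : 0 < a := hr2 ▸ (by positivity)
  have hd : (0:ℝ) < a + x * m := by positivity
  have key : (s * r / t - 1) ^ 2 + m * s ^ 2 - x * m / (a + x * m)
      = ((a + x * m) * s - r * t) ^ 2 / (t ^ 2 * (a + x * m)) := by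
    rw [← ht2, ← hr2]
    field_simp
    ring
  nlinarith [div_nonneg (sq_nonneg ((a + x * m) * s - r * t))
    (le_of_lt (by positivity : (0:ℝ) < t ^ 2 * (a + x * m))), key]

set_option maxHeartbeats 1000000 in
private lemma aux_eta (a m x y : ℝ) (ha : 0 < a) (hm : 0 < m) (hx : 0 < x) (hy : 0 < y) :
    y * m / (a + y * m) + (a * m * y ^ 2 / (a + y * m) ^ 2) / y
      ≤ x * m / (a + x * m) + (a * m * y ^ 2 / (a + y * m) ^ 2) / x := by
  have hdx : (0:ℝ) < a + x * m := by positivity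
  have hdy : (0:ℝ) < a + y * m := by positivity
  have key : (x * m / (a + x * m) + (a * m * y ^ 2 / (a + y * m) ^ 2) / x)
      - (y * m / (a + y * m) + (a * m * y ^ 2 / (a + y * m) ^ 2) / y)
      = m * a ^ 2 * (x - y) ^ 2 / (x * (a + x * m) * (a + y * m) ^ 2) := by
    field_simp
    ring
  nlinarith [div_nonneg (by positivity : (0:ℝ) ≤ m * a ^ 2 * (x - y) ^ 2)
    (le_of_lt (by positivity : (0:ℝ) < x * (a + x * m) * (a + y * m) ^ 2)), key]

/-- **core of Theorem 2.** Let `c_k, μ_k > 0`, `σ² > 0` with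
`∑ c_k²/μ_k > σ²`. Let `γ* > 0` solve `∑ (c_k²/μ_k)/((c_k²/μ_k)γ + 1)² = σ²`,
set `η* = 1/γ*` and `p_k* = c_k²η*/(c_k² + η*μ_k)²`. Then the regularized
channel-inversion powers `p*` together with `η*` jointly minimize the per-state
Lagrangian `L(p, η) = ∑ (√(p_k)c_k/√η − 1)² + σ²/η + ∑ μ_k p_k` over all
`p ∈ [0,∞)^K` and `η > 0`. -/
theorem stmt14
    (K : ℕ) (hK : 1 ≤ K) (c μ : Fin K → ℝ) (σ2 : ℝ)
    (hc : ∀ k, 0 < c k) (hμ : ∀ k, 0 < μ k) (hσ2 : 0 < σ2)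
    (hsum : σ2 < ∑ k, (c k) ^ 2 / μ k)
    (L : (Fin K → ℝ) → ℝ → ℝ)
    (hL : ∀ p η, L p η =
      (∑ k, (Real.sqrt (p k) * c k / Real.sqrt η - 1) ^ 2) + σ2 / η + ∑ k, μ k * p k)
    (γstar : ℝ) (hγ : 0 < γstar)
    (hstat : (∑ k, ((c k) ^ 2 / μ k) / (((c k) ^ 2 / μ k) * γstar + 1) ^ 2) = σ2)
    (ηstar : ℝ) (hηstar : ηstar = 1 / γstar)
    (pstar : Fin K → ℝ)
    (hpstar : ∀ k, pstar k = (c k) ^ 2 * ηstar / ((c k) ^ 2 + ηstar * μ k) ^ 2) :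
    ∀ (p : Fin K → ℝ) (η : ℝ), (∀ k, 0 ≤ p k) → 0 < η →
      L pstar ηstar ≤ L p η := by
  intro p η hp hη
  have hηs : 0 < ηstar := by rw [hηstar]; positivity
  have hγne : γstar ≠ 0 := ne_of_gt hγ
  -- the multiplier weights, summing to σ2
  have hb : σ2 = ∑ k, (c k)^2 * μ k * ηstar^2 / ((c k)^2 + ηstar * μ k)^2 := by
    rw [← hstat]
    apply Finset.sum_congr rfl
    intro k _
    have hμk := hμ k
    have hck := hc k
    have hA : (0:ℝ) < (c k)^2 / μ k * γstar + 1 := by positivity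
    have hden : (0:ℝ) < (c k)^2 + ηstar * μ k := by positivity
    rw [hηstar] at hden ⊢
    rw [div_eq_div_iff (by positivity) (by positivity)]
    field_simp
  -- Step B: value of L at (pstar, ηstar)
  have hsqη : Real.sqrt ηstar ^ 2 = ηstar := Real.sq_sqrt hηs.le
  have hsqηpos : 0 < Real.sqrt ηstar := Real.sqrt_pos.mpr hηs
  have stepB : L pstar ηstar
      = (∑ k, ηstar * μ k / ((c k)^2 + ηstar * μ k)) + σ2 / ηstar := by
    rw [hL]
    have hterm : ∀ k, (Real.sqrt (pstar k) * c k / Real.sqrt ηstar - 1) ^ 2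
        + μ k * pstar k = ηstar * μ k / ((c k)^2 + ηstar * μ k) := by
      intro k
      have hck := hc k
      have hμk := hμ k
      have hden : (0:ℝ) < (c k)^2 + ηstar * μ k := by positivity
      have hsq : Real.sqrt (pstar k)
          = c k * Real.sqrt ηstar / ((c k)^2 + ηstar * μ k) := by
        rw [hpstar k, show (c k) ^ 2 * ηstar / ((c k) ^ 2 + ηstar * μ k) ^ 2
            = (c k * Real.sqrt ηstar / ((c k)^2 + ηstar * μ k))^2 by
          rw [div_pow, mul_pow, hsqη]]
        exact Real.sqrt_sq (by positivity)
      rw [hsq, hpstar k]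
      have h1 : c k * Real.sqrt ηstar / ((c k)^2 + ηstar * μ k) * c k / Real.sqrt ηstar
          = (c k)^2 / ((c k)^2 + ηstar * μ k) := by
        field_simp
      rw [h1]
      field_simp
      ring
    calc (∑ k, (Real.sqrt (pstar k) * c k / Real.sqrt ηstar - 1) ^ 2) + σ2 / ηstar
          + ∑ k, μ k * pstar k
        = (∑ k, ((Real.sqrt (pstar k) * c k / Real.sqrt ηstar - 1) ^ 2
            + μ k * pstar k)) + σ2 / ηstar := by
          rw [Finset.sum_add_distrib]; ring
      _ = (∑ k, ηstar * μ k / ((c k)^2 + ηstar * μ k)) + σ2 / ηstar := by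
          rw [Finset.sum_congr rfl (fun k _ => hterm k)]
  -- Step A: lower bound for L p η
  have stepA : (∑ k, η * μ k / ((c k)^2 + η * μ k)) + σ2 / η ≤ L p η := by
    rw [hL]
    have hterm : ∀ k ∈ Finset.univ, η * μ k / ((c k)^2 + η * μ k)
        ≤ (Real.sqrt (p k) * c k / Real.sqrt η - 1) ^ 2 + μ k * p k := by
      intro k _
      have h := aux_inner ((c k)^2) (c k) (μ k) η (Real.sqrt (p k)) (Real.sqrt η)
        (hc k) rfl (hμ k) hη (Real.sqrt_nonneg _)
        (Real.sqrt_pos.mpr hη) (Real.sq_sqrt hη.le)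
      rw [Real.sq_sqrt (hp k)] at h
      exact h
    have h1 := Finset.sum_le_sum hterm
    have h2 : (∑ k, ((Real.sqrt (p k) * c k / Real.sqrt η - 1) ^ 2 + μ k * p k))
        = (∑ k, (Real.sqrt (p k) * c k / Real.sqrt η - 1) ^ 2) + ∑ k, μ k * p k := by
      rw [Finset.sum_add_distrib]
    linarith [h1, h2.le, h2.ge]
  -- Step C
  have stepC : (∑ k, ηstar * μ k / ((c k)^2 + ηstar * μ k)) + σ2 / ηstar
      ≤ (∑ k, η * μ k / ((c k)^2 + η * μ k)) + σ2 / η := by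
    have hrw : ∀ (τ : ℝ), 0 < τ →
        (∑ k, τ * μ k / ((c k)^2 + τ * μ k)) + σ2 / τ
        = ∑ k, (τ * μ k / ((c k)^2 + τ * μ k)
            + ((c k)^2 * μ k * ηstar^2 / ((c k)^2 + ηstar * μ k)^2) / τ) := by
      intro τ hτ
      rw [Finset.sum_add_distrib, hb, Finset.sum_div]
    rw [hrw ηstar hηs, hrw η hη]
    apply Finset.sum_le_sum
    intro k _
    exact aux_eta ((c k)^2) (μ k) η ηstar (by have := hc k; positivity) (hμ k) hη hηs
  calc L pstar ηstar = _ := stepB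
    _ ≤ _ := stepC
    _ ≤ L p η := stepA
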